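/- For every integer p ≥ 2, the uniform matroid U_{2,p+2} is not p-entropic: there is no probability distribution on [p]^{p+2} with random variables X_1,…,X_{p+2} such that the base-p Shannon entropy satisfies H(X_S) = min(|S|, 2) for every subset S of {1,…,p+2}. -/

import Mathlib

open scoped Classical BigOperators

/-- Shannon entropy in base `q` of a probability mass function on a finite type. -/
noncomputable def shannonEntropy {α : Type*} [Fintype α] (q : ℝ) (μ : PMF α) : ℝ :=
  -∑ x : α, (μ x).toReal * Real.logb q (μ x).toReal

/-- Marginal of a distribution on `ι → α` on the coordinates in `S`. -/
noncomputable def marg {ι α : Type*} (μ : PMF (ι → α)) (S : Finset ι) :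
    PMF ({ i // i ∈ S } → α) :=
  μ.map fun x i => x i.1

noncomputable def prob {α : Type*} (ν : PMF α) (a : α) : ℝ := (ν a).toReal

lemma prob_nonneg {α : Type*} (ν : PMF α) (a : α) : 0 ≤ prob ν a := ENNReal.toReal_nonneg

lemma prob_eq_zero_iff {α : Type*} (ν : PMF α) (a : α) : prob ν a = 0 ↔ ν a = 0 := by
  rw [prob, ENNReal.toReal_eq_zero_iff]
  simp [ν.apply_ne_top a]

lemma sum_prob {α : Type*} [Fintype α] (ν : PMF α) : ∑ a, prob ν a = 1 := by
  have h := ν.tsum_coe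
  rw [tsum_fintype] at h
  have h2 : ((∑ a, ν a)).toReal = (1 : ENNReal).toReal := by rw [h]
  rw [ENNReal.toReal_sum (fun a _ => ν.apply_ne_top a)] at h2
  simpa [prob] using h2

lemma entropy_mul_log {α : Type*} [Fintype α] {q : ℝ} (hq : 1 < q) (ν : PMF α) :
    Real.log q * shannonEntropy q ν = -∑ a, prob ν a * Real.log (prob ν a) := by
  have hlq : Real.log q ≠ 0 := ne_of_gt (Real.log_pos hq)
  rw [shannonEntropy, mul_neg, neg_inj, Finset.mul_sum]
  refine Finset.sum_congr rfl fun a _ => ?_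
  rw [Real.logb]
  field_simp [prob]
  rfl

lemma sub_le_mul_log (n x : ℝ) (hn : 0 < n) (hx : 0 ≤ x) :
    x - 1/n ≤ x * Real.log (n * x) := by
  rcases eq_or_lt_of_le hx with h | h
  · rw [← h, zero_mul]
    have h0 : (0:ℝ) ≤ 1/n := by positivity
    linarith
  · have hy : 0 < n * x := by positivity
    have h1 := Real.log_le_sub_one_of_pos (x := 1/(n*x)) (by positivity)
    have h2 : Real.log (1/(n*x)) = -Real.log (n*x) := by rw [one_div, Real.log_inv]
    rw [h2] at h1
    have h3 := mul_le_mul_of_nonneg_left h1 hx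
    rw [mul_neg] at h3
    have h4 : x * (1/(n*x) - 1) = 1/n - x := by field_simp
    linarith

lemma full_support_of_entropy_eq {α : Type*} [Fintype α] {q : ℝ} (hq : 1 < q) (ν : PMF α)
    (h : shannonEntropy q ν = Real.logb q (Fintype.card α)) (a : α) : ν a ≠ 0 := by
  set n : ℝ := (Fintype.card α : ℝ) with hn_def
  have hcard : 0 < Fintype.card α := Fintype.card_pos_iff.mpr ⟨a⟩
  have hn : 0 < n := by rw [hn_def]; exact_mod_cast hcard
  have hlq : Real.log q ≠ 0 := ne_of_gt (Real.log_pos hq)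
  have hsum1 : ∑ b, prob ν b = 1 := sum_prob ν
  have hE := entropy_mul_log hq ν
  rw [h] at hE
  have hlogn : Real.log q * Real.logb q n = Real.log n := by
    rw [Real.logb]; field_simp
  rw [hlogn] at hE
  have hD : ∑ b, prob ν b * Real.log (n * prob ν b) = 0 := by
    have hterm : ∀ b : α, prob ν b * Real.log (n * prob ν b)
        = prob ν b * Real.log n + prob ν b * Real.log (prob ν b) := by
      intro b
      rcases eq_or_ne (prob ν b) 0 with hb | hb
      · simp [hb]
      · rw [Real.log_mul (ne_of_gt hn) hb]; ring
    rw [Finset.sum_congr rfl (fun b _ => hterm b), Finset.sum_add_distrib,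
        ← Finset.sum_mul, hsum1]
    have : ∑ a, prob ν a * Real.log (prob ν a) = -Real.log n := by linarith
    rw [this]; ring
  have hzero : ∀ b ∈ (Finset.univ : Finset α),
      prob ν b * Real.log (n * prob ν b) - (prob ν b - 1/n) = 0 := by
    rw [← Finset.sum_eq_zero_iff_of_nonneg (fun b _ =>
      by linarith [sub_le_mul_log n (prob ν b) hn (prob_nonneg ν b)])]
    rw [Finset.sum_sub_distrib, hD, Finset.sum_sub_distrib, hsum1, Finset.sum_const,
      Finset.card_univ, nsmul_eq_mul]
    have : (Fintype.card α : ℝ) * (1/n) = 1 := by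
      rw [← hn_def]; field_simp
    rw [this]; ring
  intro hν
  have hpa : prob ν a = 0 := (prob_eq_zero_iff ν a).mpr hν
  have := hzero a (Finset.mem_univ a)
  rw [hpa] at this
  simp at this
  rw [this] at hn
  simp at hn

lemma map_eq_entropy_inj {α β : Type*} [Fintype α] [Fintype β] {q : ℝ} (hq : 1 < q)
    (ν : PMF α) (π : α → β)
    (h : shannonEntropy q (ν.map π) = shannonEntropy q ν) :
    ∀ a a', ν a ≠ 0 → ν a' ≠ 0 → π a = π a' → a = a' := by
  have hlq : Real.log q ≠ 0 := ne_of_gt (Real.log_pos hq)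
  set f : α → ℝ := prob ν with hf
  set w : β → ℝ := prob (ν.map π) with hwdef
  have hw : ∀ b, w b = ∑ a ∈ Finset.univ.filter (fun a => π a = b), f a := by
    intro b
    rw [hwdef, prob, PMF.map_apply, tsum_fintype,
      ENNReal.toReal_sum (fun a _ => by split_ifs <;> simp [ν.apply_ne_top])]
    rw [Finset.sum_filter]
    refine Finset.sum_congr rfl fun a _ => ?_
    by_cases hba : b = π a
    · rw [if_pos hba, if_pos hba.symm]; rfl
    · rw [if_neg hba, if_neg (fun hh => hba hh.symm)]; simp
  have hfle : ∀ a, f a ≤ w (π a) := by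
    intro a
    rw [hw]
    exact Finset.single_le_sum (fun i _ => prob_nonneg ν i)
      (Finset.mem_filter.mpr ⟨Finset.mem_univ a, rfl⟩)
  have hkey : ∑ b, w b * Real.log (w b) = ∑ a, f a * Real.log (w (π a)) := by
    rw [← Finset.sum_fiberwise (Finset.univ : Finset α) π (fun a => f a * Real.log (w (π a)))]
    refine Finset.sum_congr rfl fun b _ => ?_
    rw [Finset.sum_congr rfl (fun a ha => by
      rw [(Finset.mem_filter.mp ha).2]), ← Finset.sum_mul, ← hw b]
  have hE1 := entropy_mul_log hq ν
  have hE2 := entropy_mul_log hq (ν.map π)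
  rw [h] at hE2
  have hEs : ∑ a, f a * Real.log (f a) = ∑ b, w b * Real.log (w b) := by
    simp only [← hf] at hE1
    simp only [← hwdef] at hE2
    linarith
  have hzero : ∀ a ∈ (Finset.univ : Finset α),
      f a * (Real.log (w (π a)) - Real.log (f a)) = 0 := by
    rw [← Finset.sum_eq_zero_iff_of_nonneg]
    · rw [Finset.sum_congr rfl (fun a _ => mul_sub (f a) _ _), Finset.sum_sub_distrib, hEs,
        ← hkey]
      ring
    · intro a _
      rcases eq_or_lt_of_le (prob_nonneg ν a) with ha | ha
      · rw [hf, ← ha]; simp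
      · have : Real.log (f a) ≤ Real.log (w (π a)) :=
          Real.log_le_log ha (hfle a)
        have := sub_nonneg.mpr this
        positivity
  intro a a' ha ha' hπ
  by_contra hne
  have hfa : 0 < f a := lt_of_le_of_ne (prob_nonneg ν a) (fun hc => ha ((prob_eq_zero_iff ν a).mp hc.symm))
  have hfa' : 0 < f a' := lt_of_le_of_ne (prob_nonneg ν a') (fun hc => ha' ((prob_eq_zero_iff ν a').mp hc.symm))
  have hlt : f a < w (π a) := by
    rw [hw]
    have hsub : ({a, a'} : Finset α) ⊆ Finset.univ.filter (fun x => π x = π a) := by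
      intro t ht
      rcases Finset.mem_insert.mp ht with rfl | ht
      · exact Finset.mem_filter.mpr ⟨Finset.mem_univ _, rfl⟩
      · rw [Finset.mem_singleton.mp ht]
        exact Finset.mem_filter.mpr ⟨Finset.mem_univ _, hπ.symm⟩
    have := Finset.sum_le_sum_of_subset_of_nonneg hsub (fun i _ _ => prob_nonneg ν i)
    rw [Finset.sum_pair hne] at this
    linarith
  have := hzero a (Finset.mem_univ a)
  have hloglt : Real.log (f a) < Real.log (w (π a)) := Real.log_lt_log hfa hlt
  nlinarith


lemma marg_subset {ι α : Type*} (μ : PMF (ι → α)) {S T : Finset ι} (hST : S ⊆ T) :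
    marg μ S = (marg μ T).map (fun y i => y ⟨i.1, hST i.2⟩) := by
  rw [marg, marg, PMF.map_comp]
  rfl

lemma marg_support {ι α : Type*} (μ : PMF (ι → α)) (T : Finset ι) (x : ι → α) (hx : μ x ≠ 0) :
    marg μ T (fun i => x i.1) ≠ 0 := by
  have hmem : (fun (i : {i // i ∈ T}) => x i.1) ∈ (marg μ T).support := by
    rw [marg, PMF.support_map]
    exact ⟨x, hx, rfl⟩
  exact (PMF.mem_support_iff _ _).mp hmem

theorem U2_p_add_two_not_p_entropic (p : ℕ) (hp : 2 ≤ p) :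
    ¬ ∃ μ : PMF (Fin (p + 2) → Fin p),
      ∀ S : Finset (Fin (p + 2)),
        shannonEntropy p (marg μ S) = (min S.card 2 : ℕ) := by
  rintro ⟨μ, hμ⟩
  have hq : (1:ℝ) < (p:ℝ) := by exact_mod_cast lt_of_lt_of_le one_lt_two hp
  have hcard2 : ∀ i j : Fin (p+2), i ≠ j → ({i, j} : Finset (Fin (p+2))).card = 2 := by
    intro i j hij
    rw [Finset.card_insert_of_notMem (by simp [hij]), Finset.card_singleton]
  have hlogb2 : ∀ S : Finset (Fin (p+2)), S.card = 2 →
      shannonEntropy (p:ℝ) (marg μ S) = Real.logb p (Fintype.card ({i // i ∈ S} → Fin p)) := by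
    intro S hS
    rw [hμ S, hS]
    rw [Fintype.card_fun, Fintype.card_coe, Fintype.card_fin, hS]
    rw [show ((p ^ 2 : ℕ) : ℝ) = ((p:ℝ)) ^ (2:ℕ) by push_cast; ring,
      Real.logb_pow, Real.logb_self_eq_one hq]
    norm_num
  -- every pair of values appears
  have hpair : ∀ i j : Fin (p+2), i ≠ j → ∀ a b : Fin p,
      ∃ x, μ x ≠ 0 ∧ x i = a ∧ x j = b := by
    intro i j hij a b
    have hiS : i ∈ ({i, j} : Finset (Fin (p+2))) := by simp
    have hjS : j ∈ ({i, j} : Finset (Fin (p+2))) := by simp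
    have hfull := full_support_of_entropy_eq hq (marg μ {i, j})
      (hlogb2 _ (hcard2 i j hij))
      (fun s => if s.1 = i then a else b)
    have hmem : (fun (s : {s // s ∈ ({i,j} : Finset (Fin (p+2)))}) => if s.1 = i then a else b)
        ∈ (marg μ {i,j}).support := (PMF.mem_support_iff _ _).mpr hfull
    rw [marg, PMF.support_map] at hmem
    obtain ⟨x, hx, hxy⟩ := hmem
    refine ⟨x, hx, ?_, ?_⟩
    · have := congrFun hxy ⟨i, hiS⟩
      simpa using this
    · have := congrFun hxy ⟨j, hjS⟩
      simpa [hij.symm] using this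
  -- determinism on triples
  have htriple : ∀ i j k : Fin (p+2), i ≠ j → i ≠ k → j ≠ k →
      ∀ x y, μ x ≠ 0 → μ y ≠ 0 → x i = y i → x j = y j → x k = y k := by
    intro i j k hij hik hjk x y hx hy hxi hxj
    have hST : ({i, j} : Finset (Fin (p+2))) ⊆ {i, j, k} := by
      intro t ht
      simp only [Finset.mem_insert, Finset.mem_singleton] at *
      tauto
    have hcardT : ({i, j, k} : Finset (Fin (p+2))).card = 3 := by
      rw [Finset.card_insert_of_notMem (by simp [hij, hik]),
        Finset.card_insert_of_notMem (by simp [hjk]), Finset.card_singleton]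
    have hEeq : shannonEntropy (p:ℝ) ((marg μ {i,j,k}).map (fun y (s : {s // s ∈ ({i,j} : Finset (Fin (p+2)))}) => y ⟨s.1, hST s.2⟩))
        = shannonEntropy (p:ℝ) (marg μ {i,j,k}) := by
      rw [← marg_subset μ hST, hμ, hμ, hcardT, hcard2 i j hij]
      norm_num
    have hinj := map_eq_entropy_inj hq (marg μ {i,j,k}) (fun y (s : {s // s ∈ ({i,j} : Finset (Fin (p+2)))}) => y ⟨s.1, hST s.2⟩) hEeq
      (fun (s : {s // s ∈ ({i,j,k} : Finset (Fin (p+2)))}) => x s.1)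
      (fun (s : {s // s ∈ ({i,j,k} : Finset (Fin (p+2)))}) => y s.1)
      (marg_support μ _ x hx) (marg_support μ _ y hy) ?_
    · exact congrFun hinj ⟨k, by simp⟩
    · funext s
      have hs := s.2
      simp only [Finset.mem_insert, Finset.mem_singleton] at hs
      rcases hs with hs | hs <;> simp only [hs] <;> assumption
  -- determinism everywhere
  have hdet : ∀ i j : Fin (p+2), i ≠ j → ∀ x y, μ x ≠ 0 → μ y ≠ 0 →
      x i = y i → x j = y j → x = y := by
    intro i j hij x y hx hy hxi hxj
    funext k
    by_cases hk1 : k = i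
    · rw [hk1]; exact hxi
    by_cases hk2 : k = j
    · rw [hk2]; exact hxj
    exact htriple i j k hij (fun h => hk1 h.symm) (fun h => hk2 h.symm) x y hx hy hxi hxj
  -- counting
  have h01 : (0 : Fin (p+2)) ≠ 1 := by
    simp [Fin.ext_iff]
  have hp0 : 0 < p := by omega
  obtain ⟨z, hz, -, -⟩ := hpair 0 1 h01 ⟨0, hp0⟩ ⟨0, hp0⟩
  set C : Finset (Fin (p+2) → Fin p) := Finset.univ.filter (fun x => μ x ≠ 0) with hCdef
  have hzC : z ∈ C := by simp [hCdef, hz]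
  have hCcard : C.card ≤ p * p := by
    have hinjC : Set.InjOn (fun (x : Fin (p+2) → Fin p) => ((x 0, x 1) : Fin p × Fin p)) C := by
      intro x hx y hy hxy
      simp only [Finset.coe_filter, Set.mem_setOf_eq, hCdef, Finset.mem_univ, true_and] at hx hy
      exact hdet 0 1 h01 x y hx hy (congrArg Prod.fst hxy) (congrArg Prod.snd hxy)
    have h := Finset.card_le_card_of_injOn (fun (x : Fin (p+2) → Fin p) => ((x 0, x 1) : Fin p × Fin p))
      (fun x _ => Finset.mem_univ _) hinjC
    simpa using h
  set A : Fin (p+2) → Finset (Fin (p+2) → Fin p) :=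
    fun i => C.filter (fun x => x i = z i) with hAdef
  have hzA : ∀ i, z ∈ A i := fun i => by simp [hAdef, hzC]
  have hAcard : ∀ i, (A i).card = p := by
    intro i
    set j : Fin (p+2) := if i = 0 then 1 else 0 with hj
    have hij : i ≠ j := by
      rw [hj]
      split_ifs with h0
      · rw [h0]; exact h01
      · exact h0
    have : (A i).card = (Finset.univ : Finset (Fin p)).card := by
      apply Finset.card_bij (fun x _ => x j)
      · intro x _; exact Finset.mem_univ _
      · intro x hx y hy hxy
        simp only [hAdef, hCdef, Finset.mem_filter, Finset.mem_univ, true_and] at hx hy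
        exact hdet i j hij x y hx.1 hy.1 (hx.2.trans hy.2.symm) hxy
      · intro b _
        obtain ⟨x, hx, hxi, hxj⟩ := hpair i j hij (z i) b
        exact ⟨x, by simp [hAdef, hCdef, hx, hxi], hxj⟩
    simpa using this
  set B : Fin (p+2) → Finset (Fin (p+2) → Fin p) := fun i => A i \ {z} with hBdef
  have hBcard : ∀ i, (B i).card = p - 1 := by
    intro i
    rw [hBdef]
    simp only
    rw [Finset.card_sdiff_of_subset (by simpa using hzA i), hAcard, Finset.card_singleton]
  have hdisj : ∀ i ∈ (Finset.univ : Finset (Fin (p+2))), ∀ j ∈ (Finset.univ : Finset (Fin (p+2))),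
      i ≠ j → Disjoint (B i) (B j) := by
    intro i _ j _ hij
    rw [Finset.disjoint_left]
    intro x hxi hxj
    simp only [hBdef, hAdef, hCdef, Finset.mem_sdiff, Finset.mem_filter, Finset.mem_univ,
      true_and, Finset.mem_singleton] at hxi hxj
    exact hxi.2 (hdet i j hij x z hxi.1.1 hz hxi.1.2 hxj.1.2)
  have hsub : (Finset.univ.biUnion B) ⊆ C \ {z} := by
    intro x hx
    rw [Finset.mem_biUnion] at hx
    obtain ⟨i, -, hxi⟩ := hx
    simp only [hBdef, hAdef, Finset.mem_sdiff, Finset.mem_filter] at hxi ⊢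
    exact ⟨hxi.1.1, hxi.2⟩
  have hchain : (p + 2) * (p - 1) ≤ C.card - 1 := by
    have h1 : ∑ i : Fin (p+2), (B i).card = (Finset.univ.biUnion B).card :=
      (Finset.card_biUnion hdisj).symm
    have h2 : (Finset.univ.biUnion B).card ≤ (C \ {z}).card := Finset.card_le_card hsub
    have h3 : (C \ {z}).card = C.card - 1 := by
      rw [Finset.card_sdiff_of_subset (by simpa using hzC), Finset.card_singleton]
    have h4 : ∑ i : Fin (p+2), (B i).card = (p + 2) * (p - 1) := by
      rw [Finset.sum_congr rfl (fun i _ => hBcard i), Finset.sum_const, Finset.card_univ,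
        Fintype.card_fin, smul_eq_mul]
    omega
  have hzC1 : 1 ≤ C.card := Finset.card_pos.mpr ⟨z, hzC⟩
  obtain ⟨m, rfl⟩ : ∃ m, p = m + 2 := ⟨p - 2, by omega⟩
  set k := m * m with hk
  have e0 : m + 2 - 1 = m + 1 := by omega
  have e1 : (m + 2 + 2) * (m + 2 - 1) = k + 5 * m + 4 := by rw [e0, hk]; ring
  have e2 : (m + 2) * (m + 2) = k + 4 * m + 4 := by rw [hk]; ring
  omega
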